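/- Let g_n ∈ SL(d,ℝ) with ‖g_n‖ → ∞, and suppose the induced projective maps converge pointwise to p : P(ℝ^{d}) → P(ℝ^{d}). Then p is not surjective; in fact the image of p is contained in a finite union of projective subspaces of dimension strictly less than d−1. -/

import Mathlib

open Filter Topology Projectivization
open scoped LinearAlgebra.Projectivization

variable {d : ℕ}

/-- The quotient topology on the real projective space `ℙ(ℝ^d)`. -/
noncomputable instance : TopologicalSpace (ℙ ℝ (Fin d → ℝ)) :=
  inferInstanceAs (TopologicalSpace (Quotient (projectivizationSetoid ℝ (Fin d → ℝ))))

/-- The projective map induced by an invertible linear map. -/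
noncomputable def projMap (g : (Fin d → ℝ) ≃ₗ[ℝ] (Fin d → ℝ)) :
    ℙ ℝ (Fin d → ℝ) → ℙ ℝ (Fin d → ℝ) :=
  Projectivization.map (g : (Fin d → ℝ) →ₗ[ℝ] (Fin d → ℝ)) g.injective

namespace Stmt15Aux

/-- The "rank one projection" map on nonzero vectors, used to embed projective space
into matrices. -/
noncomputable def F (u : {v : Fin d → ℝ // v ≠ 0}) : Fin d → Fin d → ℝ :=
  fun i j => u.1 i * u.1 j / (∑ k, u.1 k ^ 2)

lemma Qpos {v : Fin d → ℝ} (hv : v ≠ 0) : 0 < ∑ k, v k ^ 2 := by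
  obtain ⟨i, hi⟩ : ∃ i, v i ≠ 0 := by
    by_contra h; push_neg at h; exact hv (funext h)
  refine Finset.sum_pos' (fun k _ => sq_nonneg _) ⟨i, Finset.mem_univ _, ?_⟩
  positivity

lemma F_resp (a b : {v : Fin d → ℝ // v ≠ 0}) (t : ℝ) (h : (a : Fin d → ℝ) = t • (b : Fin d → ℝ)) :
    F a = F b := by
  have ht : t ≠ 0 := by
    rintro rfl
    exact a.2 (by simpa using h)
  have hQb : (∑ k, (b : Fin d → ℝ) k ^ 2) ≠ 0 := ne_of_gt (Qpos b.2)
  funext i j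
  simp only [F, h, Pi.smul_apply, smul_eq_mul, mul_pow]
  rw [← Finset.mul_sum]
  field_simp

lemma F_inj (a b : {v : Fin d → ℝ // v ≠ 0}) (h : F a = F b) :
    ∃ t : ℝˣ, (t : ℝ) • (b : Fin d → ℝ) = (a : Fin d → ℝ) := by
  set Qa := ∑ k, (a : Fin d → ℝ) k ^ 2 with hQa
  set Qb := ∑ k, (b : Fin d → ℝ) k ^ 2 with hQb
  have hQa0 : 0 < Qa := Qpos a.2
  have hQb0 : 0 < Qb := Qpos b.2
  obtain ⟨j, hj⟩ : ∃ j, (a : Fin d → ℝ) j ≠ 0 := by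
    by_contra hc; push_neg at hc; exact a.2 (funext hc)
  have hjj := congrFun (congrFun h j) j
  simp only [F] at hjj
  have hbj : (b : Fin d → ℝ) j ≠ 0 := by
    intro hb0
    rw [hb0] at hjj
    simp only [mul_zero, zero_div] at hjj
    have h2 := (div_eq_zero_iff.mp hjj).resolve_right (ne_of_gt hQa0)
    exact hj (mul_self_eq_zero.mp h2)
  set t : ℝ := ((b : Fin d → ℝ) j * Qa) / ((a : Fin d → ℝ) j * Qb) with hT
  have ht : t ≠ 0 := by
    apply div_ne_zero (mul_ne_zero hbj (ne_of_gt hQa0)) (mul_ne_zero hj (ne_of_gt hQb0))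
  refine ⟨Units.mk0 t ht, funext fun i => ?_⟩
  have hij := congrFun (congrFun h i) j
  simp only [F] at hij
  -- hij : a i * a j / Qa = b i * b j / Qb
  have : (a : Fin d → ℝ) i * (a : Fin d → ℝ) j * Qb = (b : Fin d → ℝ) i * (b : Fin d → ℝ) j * Qa := by
    rw [← hQa, ← hQb, div_eq_div_iff (ne_of_gt hQa0) (ne_of_gt hQb0)] at hij
    linarith [hij]
  show t * (b : Fin d → ℝ) i = (a : Fin d → ℝ) i
  rw [hT]
  field_simp
  linarith [this]

/-- Projective space embeds injectively and continuously into matrices, hence is Hausdorff. -/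
noncomputable def Fbar : ℙ ℝ (Fin d → ℝ) → (Fin d → Fin d → ℝ) :=
  Quotient.lift F (by
    rintro ⟨a, ha⟩ ⟨b, hb⟩ ⟨⟨t, t', htt, htt'⟩, rfl : (t : ℝ) • b = a⟩
    exact F_resp _ _ t rfl)

lemma Fbar_continuous : Continuous (Fbar (d := d)) := by
  refine Continuous.quotient_lift ?_ _
  refine continuous_pi fun i => continuous_pi fun j => ?_
  have h1 : Continuous fun u : {v : Fin d → ℝ // v ≠ 0} => u.1 i * u.1 j :=
    ((continuous_apply i).comp continuous_subtype_val).mul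
      ((continuous_apply j).comp continuous_subtype_val)
  have h2 : Continuous fun u : {v : Fin d → ℝ // v ≠ 0} => ∑ k, u.1 k ^ 2 := by
    refine continuous_finset_sum _ fun k _ => ?_
    exact ((continuous_apply k).comp continuous_subtype_val).pow 2
  exact h1.div h2 fun u => ne_of_gt (Qpos u.2)

lemma Fbar_injective : Function.Injective (Fbar (d := d)) := by
  intro x y
  induction x using Quotient.inductionOn'
  induction y using Quotient.inductionOn'
  intro h
  exact Quotient.sound' (F_inj _ _ h)

instance : T2Space (ℙ ℝ (Fin d → ℝ)) :=
  T2Space.of_injective_continuous Fbar_injective Fbar_continuous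

lemma tendsto_mk {u : ℕ → Fin d → ℝ} {v : Fin d → ℝ} (hu : ∀ n, u n ≠ 0) (hv : v ≠ 0)
    (h : Tendsto u atTop (𝓝 v)) :
    Tendsto (fun n => Projectivization.mk ℝ (u n) (hu n)) atTop
      (𝓝 (Projectivization.mk ℝ v hv)) := by
  have h1 : Tendsto (fun n => (⟨u n, hu n⟩ : {w : Fin d → ℝ // w ≠ 0})) atTop
      (𝓝 (⟨v, hv⟩ : {w : Fin d → ℝ // w ≠ 0})) := by
    rw [tendsto_subtype_rng]
    exact h
  have h2 : Continuous fun w : {w : Fin d → ℝ // w ≠ 0} =>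
      (Quotient.mk'' w : ℙ ℝ (Fin d → ℝ)) := continuous_quotient_mk'
  exact (h2.tendsto _).comp h1

lemma step (g : ℕ → (Fin d → ℝ) ≃ₗ[ℝ] (Fin d → ℝ))
    (p : ℙ ℝ (Fin d → ℝ) → ℙ ℝ (Fin d → ℝ))
    (hconv : ∀ x : ℙ ℝ (Fin d → ℝ),
      Tendsto (fun n => projMap (g n) x) atTop (𝓝 (p x)))
    (W : Submodule ℝ (Fin d → ℝ)) (hW : W ≠ ⊥) :
    ∃ h' : W →ₗ[ℝ] (Fin d → ℝ), h' ≠ 0 ∧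
      ∀ (v : Fin d → ℝ) (hv : v ≠ 0) (hvW : v ∈ W) (hnz : h' ⟨v, hvW⟩ ≠ 0),
        p (Projectivization.mk ℝ v hv) = Projectivization.mk ℝ (h' ⟨v, hvW⟩) hnz := by
  classical
  set m := Module.finrank ℝ ↥W with hm
  have hm0 : 0 < m := by
    rw [hm]
    exact Module.finrank_pos_iff.mpr (Submodule.nontrivial_iff_ne_bot.mpr hW)
  set b : Module.Basis (Fin m) ℝ ↥W := Module.finBasis ℝ ↥W with hb
  set A : ℕ → (Fin m → Fin d → ℝ) := fun n i => g n ((b i : Fin d → ℝ)) with hA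
  have hAne : ∀ n, A n ≠ 0 := by
    intro n hzero
    have hb0 : (b ⟨0, hm0⟩ : Fin d → ℝ) ≠ 0 := by
      simpa [Submodule.coe_eq_zero] using b.ne_zero ⟨0, hm0⟩
    have : g n ((b ⟨0, hm0⟩ : Fin d → ℝ)) = 0 := congrFun hzero ⟨0, hm0⟩
    exact hb0 ((g n).map_eq_zero_iff.mp this)
  have hc : ∀ n, 0 < ‖A n‖ := fun n => norm_pos_iff.mpr (hAne n)
  set B : ℕ → (Fin m → Fin d → ℝ) := fun n => ‖A n‖⁻¹ • A n with hB'
  have hBmem : ∀ n, B n ∈ Metric.sphere (0 : Fin m → Fin d → ℝ) 1 := by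
    intro n
    rw [mem_sphere_zero_iff_norm, hB', norm_smul, norm_inv, norm_norm]
    exact inv_mul_cancel₀ (hc n).ne'
  obtain ⟨Bl, hmem, φ, hφ, hBtend⟩ :=
    (isCompact_sphere (0 : Fin m → Fin d → ℝ) 1).tendsto_subseq hBmem
  have hBlne : Bl ≠ 0 := by
    intro h0
    rw [mem_sphere_zero_iff_norm, h0, norm_zero] at hmem
    norm_num at hmem
  set h' : W →ₗ[ℝ] (Fin d → ℝ) := b.constr ℝ Bl with hh'
  have hconstr : ∀ (x : ↥W), h' x = ∑ i, b.repr x i • Bl i := fun x => by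
    rw [hh']
    simp [Module.Basis.constr_apply_fintype, Module.Basis.equivFun_apply]
  have hne : h' ≠ 0 := by
    intro h0
    apply hBlne
    funext i
    have : h' (b i) = Bl i := by rw [hh', b.constr_basis]
    rw [h0] at this
    simpa using this.symm
  refine ⟨h', hne, ?_⟩
  intro v hv hvW hnz
  have hgv : ∀ n, g n v ≠ 0 := fun n h0 => hv (by simpa using (g n).map_eq_zero_iff.mp h0)
  set r : Fin m → ℝ := fun i => b.repr ⟨v, hvW⟩ i with hr
  have hvsum : v = ∑ i, r i • ((b i : Fin d → ℝ)) := by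
    have h1 : (⟨v, hvW⟩ : ↥W) = ∑ i, r i • b i := by
      rw [hr]
      exact (b.sum_repr ⟨v, hvW⟩).symm
    calc v = (W.subtype ⟨v, hvW⟩ : Fin d → ℝ) := rfl
    _ = W.subtype (∑ i, r i • b i) := by rw [← h1]
    _ = ∑ i, r i • ((b i : Fin d → ℝ)) := by
        rw [map_sum]
        simp
  set u : ℕ → Fin d → ℝ := fun k => ‖A (φ k)‖⁻¹ • g (φ k) v with hu'
  have husum : ∀ k, u k = ∑ i, r i • B (φ k) i := by
    intro k
    show ‖A (φ k)‖⁻¹ • g (φ k) v = ∑ i, r i • B (φ k) i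
    conv_lhs => rw [hvsum]
    rw [map_sum, Finset.smul_sum]
    refine Finset.sum_congr rfl fun i _ => ?_
    rw [map_smul, hB']
    simp only [Pi.smul_apply, hA]
    rw [smul_comm]
  have hu : ∀ k, u k ≠ 0 := fun k =>
    smul_ne_zero (inv_ne_zero (hc _).ne') (hgv _)
  have hLsum : h' ⟨v, hvW⟩ = ∑ i, r i • Bl i := by rw [hconstr]
  have htend : Tendsto u atTop (𝓝 (h' ⟨v, hvW⟩)) := by
    rw [hLsum, funext husum]
    refine tendsto_finset_sum _ fun i _ => ?_
    exact (((continuous_apply i).tendsto Bl).comp hBtend).const_smul (r i)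
  have h1 : Tendsto (fun k => Projectivization.mk ℝ (u k) (hu k)) atTop
      (𝓝 (Projectivization.mk ℝ (h' ⟨v, hvW⟩) hnz)) := tendsto_mk hu hnz htend
  have heq : ∀ k, Projectivization.mk ℝ (u k) (hu k)
      = projMap (g (φ k)) (Projectivization.mk ℝ v hv) := by
    intro k
    rw [projMap, Projectivization.map_mk]
    rw [mk_eq_mk_iff']
    exact ⟨‖A (φ k)‖⁻¹, rfl⟩
  rw [funext heq] at h1
  have h2 : Tendsto (fun k => projMap (g (φ k)) (Projectivization.mk ℝ v hv)) atTop
      (𝓝 (p (Projectivization.mk ℝ v hv))) :=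
    (hconv _).comp hφ.tendsto_atTop
  exact tendsto_nhds_unique h2 h1

lemma topstep (hd : 2 ≤ d) (g : ℕ → (Fin d → ℝ) ≃ₗ[ℝ] (Fin d → ℝ))
    (hdet : ∀ n, LinearMap.det ((g n : (Fin d → ℝ) →ₗ[ℝ] (Fin d → ℝ))) = 1)
    (hnorm : Tendsto
      (fun n => ‖LinearMap.toContinuousLinearMap
        ((g n : (Fin d → ℝ) →ₗ[ℝ] (Fin d → ℝ)))‖) atTop atTop)
    (p : ℙ ℝ (Fin d → ℝ) → ℙ ℝ (Fin d → ℝ))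
    (hconv : ∀ x : ℙ ℝ (Fin d → ℝ),
      Tendsto (fun n => projMap (g n) x) atTop (𝓝 (p x))) :
    ∃ h : (Fin d → ℝ) →ₗ[ℝ] (Fin d → ℝ), h ≠ 0 ∧ LinearMap.det h = 0 ∧
      ∀ (v : Fin d → ℝ) (hv : v ≠ 0) (hnz : h v ≠ 0),
        p (Projectivization.mk ℝ v hv) = Projectivization.mk ℝ (h v) hnz := by
  classical
  have hdnat : 0 < d := by omega
  have hdR : (0 : ℝ) < d := by exact_mod_cast hdnat
  set b : Module.Basis (Fin d) ℝ (Fin d → ℝ) := Pi.basisFun ℝ (Fin d) with hb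
  set A : ℕ → (Fin d → Fin d → ℝ) := fun n i => g n (b i) with hA
  have hsum_repr : ∀ w : Fin d → ℝ, ∑ i, w i • (b i : Fin d → ℝ) = w := by
    intro w
    have := b.sum_repr w
    simpa [hb, Pi.basisFun_repr] using this
  have hAne : ∀ n, A n ≠ 0 := by
    intro n hzero
    have hb0 : (b ⟨0, hdnat⟩ : Fin d → ℝ) ≠ 0 := b.ne_zero ⟨0, hdnat⟩
    have : g n (b ⟨0, hdnat⟩) = 0 := congrFun hzero ⟨0, hdnat⟩
    exact hb0 ((g n).map_eq_zero_iff.mp this)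
  have hc : ∀ n, 0 < ‖A n‖ := fun n => norm_pos_iff.mpr (hAne n)
  -- comparison of norms
  have hgsum : ∀ n (v : Fin d → ℝ), g n v = ∑ i, v i • A n i := by
    intro n v
    conv_lhs => rw [← hsum_repr v]
    rw [map_sum]
    refine Finset.sum_congr rfl fun i _ => ?_
    rw [map_smul]
  have hbound : ∀ n, ‖LinearMap.toContinuousLinearMap
      ((g n : (Fin d → ℝ) →ₗ[ℝ] (Fin d → ℝ)))‖ ≤ (d : ℝ) * ‖A n‖ := by
    intro n
    refine ContinuousLinearMap.opNorm_le_bound _ (by positivity) fun v => ?_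
    have happ : LinearMap.toContinuousLinearMap
        ((g n : (Fin d → ℝ) →ₗ[ℝ] (Fin d → ℝ))) v = g n v := by
      simp
    rw [happ, hgsum n v]
    calc ‖∑ i, v i • A n i‖ ≤ ∑ i, ‖v i • A n i‖ := norm_sum_le _ _
    _ ≤ ∑ _i : Fin d, ‖v‖ * ‖A n‖ := by
        refine Finset.sum_le_sum fun i _ => ?_
        rw [norm_smul]
        exact mul_le_mul (norm_le_pi_norm v i) (norm_le_pi_norm (A n) i)
          (norm_nonneg _) (norm_nonneg _)
    _ = (d : ℝ) * ‖A n‖ * ‖v‖ := by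
        rw [Finset.sum_const, Finset.card_univ, Fintype.card_fin, nsmul_eq_mul]
        ring
  have hAtop : Tendsto (fun n => ‖A n‖) atTop atTop := by
    have h1 : Tendsto (fun n => ‖LinearMap.toContinuousLinearMap
        ((g n : (Fin d → ℝ) →ₗ[ℝ] (Fin d → ℝ)))‖ / (d : ℝ)) atTop atTop :=
      hnorm.atTop_div_const hdR
    refine tendsto_atTop_mono (fun n => ?_) h1
    rw [div_le_iff₀ hdR]
    calc ‖LinearMap.toContinuousLinearMap ((g n : (Fin d → ℝ) →ₗ[ℝ] (Fin d → ℝ)))‖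
        ≤ (d : ℝ) * ‖A n‖ := hbound n
    _ = ‖A n‖ * (d : ℝ) := by ring
  set B : ℕ → (Fin d → Fin d → ℝ) := fun n => ‖A n‖⁻¹ • A n with hB'
  have hBmem : ∀ n, B n ∈ Metric.sphere (0 : Fin d → Fin d → ℝ) 1 := by
    intro n
    rw [mem_sphere_zero_iff_norm, hB', norm_smul, norm_inv, norm_norm]
    exact inv_mul_cancel₀ (hc n).ne'
  obtain ⟨Bl, hmem, φ, hφ, hBtend⟩ :=
    (isCompact_sphere (0 : Fin d → Fin d → ℝ) 1).tendsto_subseq hBmem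
  have hBlne : Bl ≠ 0 := by
    intro h0
    rw [mem_sphere_zero_iff_norm, h0, norm_zero] at hmem
    norm_num at hmem
  set h : (Fin d → ℝ) →ₗ[ℝ] (Fin d → ℝ) := b.constr ℝ Bl with hh
  have hconstr : ∀ (M : Fin d → Fin d → ℝ) (x : Fin d → ℝ),
      b.constr ℝ M x = ∑ i, x i • M i := by
    intro M x
    simp [Module.Basis.constr_apply_fintype, Module.Basis.equivFun_apply, hb, Pi.basisFun_repr]
  have hne : h ≠ 0 := by
    intro h0
    apply hBlne
    funext i
    have : h (b i) = Bl i := by rw [hh, b.constr_basis]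
    rw [h0] at this
    simpa using this.symm
  -- determinant
  set D : (Fin d → Fin d → ℝ) → ℝ := fun M => LinearMap.det (b.constr ℝ M) with hD
  have hDmat : ∀ M, D M = Matrix.det ((Matrix.of M).transpose) := by
    intro M
    show LinearMap.det (b.constr ℝ M) = (Matrix.of M).transpose.det
    rw [← LinearMap.det_toMatrix b]
    congr 1
    ext i j
    rw [LinearMap.toMatrix_apply, Module.Basis.constr_basis]
    simp [hb, Pi.basisFun_repr, Matrix.transpose_apply, Matrix.of_apply]
  have hDcont : Continuous D := by
    rw [funext hDmat]
    refine Continuous.matrix_det ?_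
    refine continuous_matrix fun i j => ?_
    exact (continuous_apply i).comp (continuous_apply j)
  have hDB : ∀ n, D (B n) = (‖A n‖⁻¹) ^ d := by
    intro n
    have hgA : b.constr ℝ (A n) = (g n : (Fin d → ℝ) →ₗ[ℝ] (Fin d → ℝ)) :=
      b.ext fun i => by rw [b.constr_basis]; rfl
    show LinearMap.det (b.constr ℝ (‖A n‖⁻¹ • A n)) = (‖A n‖⁻¹) ^ d
    rw [map_smul, LinearMap.det_smul, hgA, hdet n,
      Module.finrank_fin_fun, mul_one]
  have hdet0 : LinearMap.det h = 0 := by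
    have h1 : Tendsto (fun k => D (B (φ k))) atTop (𝓝 (D Bl)) :=
      (hDcont.tendsto Bl).comp hBtend
    have h2 : Tendsto (fun k => D (B (φ k))) atTop (𝓝 0) := by
      have h3 : Tendsto (fun k => ‖A (φ k)‖⁻¹) atTop (𝓝 0) :=
        tendsto_inv_atTop_zero.comp (hAtop.comp hφ.tendsto_atTop)
      have h4 := h3.pow d
      rw [zero_pow (by omega : d ≠ 0)] at h4
      simpa [hDB] using h4
    have : D Bl = 0 := tendsto_nhds_unique h1 h2
    exact this
  refine ⟨h, hne, hdet0, ?_⟩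
  intro v hv hnz
  have hgv : ∀ n, g n v ≠ 0 := fun n h0 => hv (by simpa using (g n).map_eq_zero_iff.mp h0)
  set u : ℕ → Fin d → ℝ := fun k => ‖A (φ k)‖⁻¹ • g (φ k) v with hu'
  have husum : ∀ k, u k = ∑ i, v i • B (φ k) i := by
    intro k
    show ‖A (φ k)‖⁻¹ • g (φ k) v = ∑ i, v i • B (φ k) i
    rw [hgsum, Finset.smul_sum]
    refine Finset.sum_congr rfl fun i _ => ?_
    rw [hB']
    simp only [Pi.smul_apply]
    rw [smul_comm]
  have hu : ∀ k, u k ≠ 0 := fun k =>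
    smul_ne_zero (inv_ne_zero (hc _).ne') (hgv _)
  have hLsum : h v = ∑ i, v i • Bl i := by rw [hh, hconstr]
  have htend : Tendsto u atTop (𝓝 (h v)) := by
    rw [hLsum, funext husum]
    refine tendsto_finset_sum _ fun i _ => ?_
    exact (((continuous_apply i).tendsto Bl).comp hBtend).const_smul (v i)
  have h1 : Tendsto (fun k => Projectivization.mk ℝ (u k) (hu k)) atTop
      (𝓝 (Projectivization.mk ℝ (h v) hnz)) := tendsto_mk hu hnz htend
  have heq : ∀ k, Projectivization.mk ℝ (u k) (hu k)
      = projMap (g (φ k)) (Projectivization.mk ℝ v hv) := by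
    intro k
    rw [projMap, Projectivization.map_mk]
    rw [mk_eq_mk_iff']
    exact ⟨‖A (φ k)‖⁻¹, rfl⟩
  rw [funext heq] at h1
  have h2 : Tendsto (fun k => projMap (g (φ k)) (Projectivization.mk ℝ v hv)) atTop
      (𝓝 (p (Projectivization.mk ℝ v hv))) :=
    (hconv _).comp hφ.tendsto_atTop
  exact tendsto_nhds_unique h2 h1

lemma cover (g : ℕ → (Fin d → ℝ) ≃ₗ[ℝ] (Fin d → ℝ))
    (p : ℙ ℝ (Fin d → ℝ) → ℙ ℝ (Fin d → ℝ))
    (hconv : ∀ x : ℙ ℝ (Fin d → ℝ),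
      Tendsto (fun n => projMap (g n) x) atTop (𝓝 (p x))) :
    ∀ (n : ℕ) (W : Submodule ℝ (Fin d → ℝ)),
      Module.finrank ℝ W ≤ n → Module.finrank ℝ W < d →
    ∃ (k : ℕ) (U : Fin k → Submodule ℝ (Fin d → ℝ)),
      (∀ i, Module.finrank ℝ (U i) < d) ∧
      ∀ (v : Fin d → ℝ) (hv : v ≠ 0), v ∈ W →
        ∃ i, (p (Projectivization.mk ℝ v hv)).submodule ≤ U i := by
  intro n
  induction n with
  | zero =>
    intro W hn _
    have hbot : W = ⊥ := by
      rw [← Submodule.finrank_eq_zero (R := ℝ) (M := Fin d → ℝ)]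
      omega
    refine ⟨0, Fin.elim0, fun i => i.elim0, ?_⟩
    intro v hv hvW
    rw [hbot, Submodule.mem_bot] at hvW
    exact absurd hvW hv
  | succ n ih =>
    intro W hn hWd
    by_cases hbot : W = ⊥
    · refine ⟨0, Fin.elim0, fun i => i.elim0, ?_⟩
      intro v hv hvW
      rw [hbot, Submodule.mem_bot] at hvW
      exact absurd hvW hv
    · obtain ⟨h', hne, hpt⟩ := step g p hconv W hbot
      set K0 := LinearMap.ker h' with hK0'
      have hK0 : K0 ≠ ⊤ := by
        intro heq
        exact hne (LinearMap.ker_eq_top.mp heq)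
      have hK0rank : Module.finrank ℝ K0 < Module.finrank ℝ W :=
        Submodule.finrank_lt hK0
      set K := K0.map W.subtype with hK'
      have hKrank : Module.finrank ℝ K = Module.finrank ℝ K0 :=
        Submodule.finrank_map_subtype_eq W K0
      obtain ⟨k, U, hU, hcov⟩ := ih K (by omega) (by omega)
      refine ⟨k + 1, Fin.cons (LinearMap.range h') U, ?_, ?_⟩
      · intro i
        refine Fin.cases ?_ (fun j => ?_) i
        · rw [Fin.cons_zero]
          exact lt_of_le_of_lt (LinearMap.finrank_range_le h') hWd
        · rw [Fin.cons_succ]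
          exact hU j
      · intro v hv hvW
        by_cases hz : h' ⟨v, hvW⟩ = 0
        · obtain ⟨i, hi⟩ := hcov v hv ⟨⟨v, hvW⟩, LinearMap.mem_ker.mpr hz, rfl⟩
          exact ⟨i.succ, by rwa [Fin.cons_succ]⟩
        · refine ⟨0, ?_⟩
          rw [hpt v hv hvW hz, Projectivization.submodule_mk, Fin.cons_zero,
            Submodule.span_singleton_le_iff_mem]
          exact ⟨⟨v, hvW⟩, rfl⟩

end Stmt15Aux

open Stmt15Aux Module

/-- If `gₙ ∈ SL(d,ℝ)` with `‖gₙ‖ → ∞` and the induced projective maps converge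
pointwise to `p : ℙ(ℝ^d) → ℙ(ℝ^d)`, then `p` is not surjective; indeed its image
is contained in a finite union of projective subspaces of projective dimension
strictly less than `d-1` (i.e. coming from linear subspaces of dimension `< d`). -/
theorem stmt_15 (hd : 2 ≤ d)
    (g : ℕ → (Fin d → ℝ) ≃ₗ[ℝ] (Fin d → ℝ))
    (hdet : ∀ n, LinearMap.det ((g n : (Fin d → ℝ) →ₗ[ℝ] (Fin d → ℝ))) = 1)
    (hnorm : Tendsto
      (fun n => ‖LinearMap.toContinuousLinearMap
        ((g n : (Fin d → ℝ) →ₗ[ℝ] (Fin d → ℝ)))‖) atTop atTop)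
    (p : ℙ ℝ (Fin d → ℝ) → ℙ ℝ (Fin d → ℝ))
    (hconv : ∀ x : ℙ ℝ (Fin d → ℝ),
      Tendsto (fun n => projMap (g n) x) atTop (𝓝 (p x))) :
    ¬ Function.Surjective p ∧
      ∃ (k : ℕ) (W : Fin k → Submodule ℝ (Fin d → ℝ)),
        (∀ i, Module.finrank ℝ (W i) < d) ∧
        ∀ x : ℙ ℝ (Fin d → ℝ), ∃ i, (p x).submodule ≤ W i := by
  classical
  obtain ⟨h, hne, hdet0, hpt⟩ := Stmt15Aux.topstep hd g hdet hnorm p hconv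
  have hfinV : Module.finrank ℝ (Fin d → ℝ) = d := Module.finrank_fin_fun ℝ
  set R := LinearMap.range h with hR'
  have hRrank : Module.finrank ℝ R < d := by
    have h1 : R < ⊤ := LinearMap.range_lt_top_of_det_eq_zero hdet0
    have h2 := Submodule.finrank_lt h1.ne
    rwa [hfinV] at h2
  set Kh := LinearMap.ker h with hKh'
  have hKtop : Kh ≠ ⊤ := fun heq => hne (LinearMap.ker_eq_top.mp heq)
  have hKrank : Module.finrank ℝ Kh < d := by
    have h2 := Submodule.finrank_lt hKtop
    rwa [hfinV] at h2
  obtain ⟨k, U, hU, hcov⟩ :=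
    Stmt15Aux.cover g p hconv (Module.finrank ℝ Kh) Kh le_rfl hKrank
  set U' : Fin (k + 1) → Submodule ℝ (Fin d → ℝ) := Fin.cons R U with hU''
  have hU'rank : ∀ i, Module.finrank ℝ (U' i) < d := by
    intro i
    refine Fin.cases ?_ (fun j => ?_) i
    · rw [hU'', Fin.cons_zero]; exact hRrank
    · rw [hU'', Fin.cons_succ]; exact hU j
  have main2 : ∀ x : ℙ ℝ (Fin d → ℝ), ∃ i, (p x).submodule ≤ U' i := by
    intro x
    by_cases hz : h x.rep = 0
    · obtain ⟨i, hi⟩ := hcov x.rep x.rep_nonzero (LinearMap.mem_ker.mpr hz)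
      rw [x.mk_rep] at hi
      exact ⟨i.succ, by rwa [hU'', Fin.cons_succ]⟩
    · have hpx := hpt x.rep x.rep_nonzero hz
      rw [x.mk_rep] at hpx
      refine ⟨0, ?_⟩
      rw [hpx, Projectivization.submodule_mk, hU'', Fin.cons_zero,
        Submodule.span_singleton_le_iff_mem]
      exact LinearMap.mem_range_self h x.rep
  refine ⟨?_, k + 1, U', hU'rank, main2⟩
  intro hsurj
  have hμ : (MeasureTheory.volume : MeasureTheory.Measure (Fin d → ℝ))
      (⋃ i, (U' i : Set (Fin d → ℝ))) = 0 := by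
    refine MeasureTheory.measure_iUnion_null fun i => ?_
    refine MeasureTheory.Measure.addHaar_submodule _ _ ?_
    intro heq
    have h3 := hU'rank i
    rw [heq, finrank_top, hfinV] at h3
    omega
  have hne_univ : (⋃ i, (U' i : Set (Fin d → ℝ))) ≠ Set.univ := by
    intro heq
    rw [heq] at hμ
    exact isOpen_univ.measure_ne_zero MeasureTheory.volume Set.univ_nonempty hμ
  obtain ⟨v0, hv0⟩ := (Set.ne_univ_iff_exists_notMem _).mp hne_univ
  have hv0ne : v0 ≠ 0 := by
    rintro rfl
    exact hv0 (Set.mem_iUnion.mpr ⟨0, (U' 0).zero_mem⟩)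
  obtain ⟨x, hx⟩ := hsurj (Projectivization.mk ℝ v0 hv0ne)
  obtain ⟨i, hi⟩ := main2 x
  rw [hx, Projectivization.submodule_mk, Submodule.span_singleton_le_iff_mem] at hi
  exact hv0 (Set.mem_iUnion.mpr ⟨i, hi⟩)
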